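/- Let X be a normed space, let (x_n)_{n≥1} be a bounded 2-co-lacunary sequence in X, and let (y_n)_{n≥1} ⊂ X be such that the series Σ_{n≥1} ‖x_n − y_n‖_X converges. Then there exists m ∈ ℕ such that the sequence (y_n)_{n≥m} is 2-co-lacunary. -/

import Mathlib

open Filter Topology

/-- A sequence `x` in a complex normed space is 2-co-lacunary if there is `C > 0` such that
`(∑ |λₙ|²)^(1/2) ≤ C ‖∑ λₙ xₙ‖` for every finitely supported scalar sequence. -/
def IsTwoColacunary {X : Type*} [NormedAddCommGroup X] [NormedSpace ℂ X] (x : ℕ → X) : Prop :=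
  ∃ C > (0 : ℝ), ∀ (l : ℕ → ℂ) (s : Finset ℕ),
    Real.sqrt (∑ n ∈ s, ‖l n‖ ^ 2) ≤ C * ‖∑ n ∈ s, l n • x n‖

/-- Perturbation lemma, part (ii): if a bounded sequence `(xₙ)` is 2-co-lacunary and
`∑ ‖xₙ - yₙ‖` converges, then some tail `(y_{n+m})ₙ` is 2-co-lacunary. -/
theorem twoColacunary_perturbation_tail
    {X : Type*} [NormedAddCommGroup X] [NormedSpace ℂ X]
    (x y : ℕ → X) (hbdd : ∃ M : ℝ, ∀ n, ‖x n‖ ≤ M) (hx : IsTwoColacunary x)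
    (hsum : Summable (fun n => ‖x n - y n‖)) :
    ∃ m : ℕ, IsTwoColacunary (fun n => y (n + m)) := by
  obtain ⟨C, hC, hCx⟩ := hx
  have h2C : (0:ℝ) < 1/(2*C) := by positivity
  have htail : Tendsto (fun m => ∑' k, ‖x (k + m) - y (k + m)‖) atTop (𝓝 0) :=
    tendsto_sum_nat_add (fun n => ‖x n - y n‖)
  obtain ⟨m, hm⟩ := (htail.eventually_lt_const h2C).exists
  refine ⟨m, 2*C, by positivity, ?_⟩
  intro l s
  -- tail of x is 2-co-lacunary with same constant
  have key : Real.sqrt (∑ n ∈ s, ‖l n‖ ^ 2) ≤ C * ‖∑ n ∈ s, l n • x (n + m)‖ := by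
    have h := hCx (fun k => if m ≤ k then l (k - m) else 0) (s.image (· + m))
    rw [Finset.sum_image (by intro a _ b _ h; simp only at h; omega),
        Finset.sum_image (by intro a _ b _ h; simp only at h; omega)] at h
    simpa using h
  have hsum' : Summable (fun k => ‖x (k + m) - y (k + m)‖) :=
    (summable_nat_add_iff (f := fun n => ‖x n - y n‖) m).2 hsum
  set R := Real.sqrt (∑ n ∈ s, ‖l n‖ ^ 2) with hR
  have hRnn : 0 ≤ R := Real.sqrt_nonneg _
  have hbound : ∀ n ∈ s, ‖l n‖ ≤ R := by
    intro n hn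
    have h1 : ‖l n‖^2 ≤ ∑ k ∈ s, ‖l k‖^2 :=
      Finset.single_le_sum (f := fun k => ‖l k‖^2) (fun k _ => sq_nonneg _) hn
    calc ‖l n‖ = Real.sqrt (‖l n‖^2) := (Real.sqrt_sq (norm_nonneg _)).symm
      _ ≤ R := Real.sqrt_le_sqrt h1
  have hdiff : ‖∑ n ∈ s, l n • x (n + m) - ∑ n ∈ s, l n • y (n + m)‖
      ≤ R * (1/(2*C)) := by
    rw [← Finset.sum_sub_distrib]
    calc ‖∑ n ∈ s, (l n • x (n+m) - l n • y (n+m))‖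
        ≤ ∑ n ∈ s, ‖l n • x (n+m) - l n • y (n+m)‖ := norm_sum_le _ _
      _ = ∑ n ∈ s, ‖l n‖ * ‖x (n+m) - y (n+m)‖ := by
          simp [← smul_sub, norm_smul]
      _ ≤ ∑ n ∈ s, R * ‖x (n+m) - y (n+m)‖ :=
          Finset.sum_le_sum fun n hn =>
            mul_le_mul_of_nonneg_right (hbound n hn) (norm_nonneg _)
      _ = R * ∑ n ∈ s, ‖x (n+m) - y (n+m)‖ := (Finset.mul_sum _ _ _).symm
      _ ≤ R * (1/(2*C)) := by
          refine mul_le_mul_of_nonneg_left (le_of_lt ?_) hRnn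
          calc ∑ n ∈ s, ‖x (n+m) - y (n+m)‖ ≤ ∑' k, ‖x (k+m) - y (k+m)‖ :=
                Summable.sum_le_tsum s (fun k _ => norm_nonneg _) hsum'
            _ < 1/(2*C) := hm
  have h2 : ‖∑ n ∈ s, l n • x (n+m)‖ ≤ ‖∑ n ∈ s, l n • y (n+m)‖ + R * (1/(2*C)) := by
    calc ‖∑ n ∈ s, l n • x (n+m)‖
        = ‖∑ n ∈ s, l n • y (n+m) + (∑ n ∈ s, l n • x (n+m) - ∑ n ∈ s, l n • y (n+m))‖ := by
          congr 1; abel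
      _ ≤ ‖∑ n ∈ s, l n • y (n+m)‖ + ‖∑ n ∈ s, l n • x (n+m) - ∑ n ∈ s, l n • y (n+m)‖ :=
          norm_add_le _ _
      _ ≤ _ := by linarith
  have hfin : R ≤ C * (‖∑ n ∈ s, l n • y (n+m)‖ + R * (1/(2*C))) :=
    key.trans (mul_le_mul_of_nonneg_left h2 hC.le)
  have hexp : C * (‖∑ n ∈ s, l n • y (n+m)‖ + R * (1/(2*C)))
      = C * ‖∑ n ∈ s, l n • y (n+m)‖ + R/2 := by
    field_simp
  linarith
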